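/- Lemma characterizing closure of the grounded extension under intersection: for f₁, f₂ ∈ LFP_τ, one has f₁ ∩ f₂ ∈ LFP_τ if and only if for every t ∈ τ with f₁ ∩ f₂ ⤙ t, there is f ∈ LFP_τ with t ∩ f = ∅. -/
import Mathlib


variable {X : Type*} [TopologicalSpace X]

/-- The set of opens defended by the family `T` of opens
(`atk t t'` reads "t' attacks t"). -/
def defends (atk : Set X → Set X → Prop) (T : Set (Set X)) : Set (Set X) :=
  {t | IsOpen t ∧ ∀ t', IsOpen t' → atk t t' → ∃ t'' ∈ T, atk t' t''}

/-- The grounded extension `LFP_τ`: the least fixed point of the defense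
function, constructed as the intersection of all prefixed points. -/
def groundedExt (atk : Set X → Set X → Prop) : Set (Set X) :=
  ⋂₀ {T : Set (Set X) | defends atk T ⊆ T}

/-- Grounded belief: some member of the grounded extension supports `P`. -/
def GroundedBelief (atk : Set X → Set X → Prop) (P : Set X) : Prop :=
  ∃ f ∈ groundedExt atk, f ⊆ P


lemma defends_mono (atk : Set X → Set X → Prop) {T₁ T₂ : Set (Set X)} (h : T₁ ⊆ T₂) :
    defends atk T₁ ⊆ defends atk T₂ := by
  intro t ⟨ht, hd⟩
  exact ⟨ht, fun t' ho ha => (hd t' ho ha).imp fun t'' ⟨h1, h2⟩ => ⟨h h1, h2⟩⟩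

lemma groundedExt_prefixed (atk : Set X → Set X → Prop) :
    defends atk (groundedExt atk) ⊆ groundedExt atk := by
  intro t ht T hT
  exact hT (defends_mono atk (Set.sInter_subset_of_mem hT) ht)

lemma groundedExt_postfixed (atk : Set X → Set X → Prop) :
    groundedExt atk ⊆ defends atk (groundedExt atk) :=
  Set.sInter_subset_of_mem (defends_mono atk (groundedExt_prefixed atk))

/-- Characterization of when the intersection of two members of the grounded
extension is again in the grounded extension. -/
theorem inter_mem_groundedExt_iff (atk : Set X → Set X → Prop)
    (h1 : ∀ t₁ t₂ : Set X, IsOpen t₁ → IsOpen t₂ → (t₁ ∩ t₂ = ∅ ↔ atk t₁ t₂ ∨ atk t₂ t₁))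
    (h2 : ∀ t t₁ t₁' : Set X, IsOpen t → IsOpen t₁ → IsOpen t₁' → atk t₁ t → t₁' ⊆ t₁ → atk t₁' t)
    (h3 : ∀ t : Set X, IsOpen t → t ≠ ∅ → atk ∅ t ∧ ¬ atk t ∅) :
    ∀ f₁ f₂ : Set X, f₁ ∈ groundedExt atk → f₂ ∈ groundedExt atk →
      (f₁ ∩ f₂ ∈ groundedExt atk ↔
        ∀ t : Set X, IsOpen t → atk (f₁ ∩ f₂) t →
          ∃ f ∈ groundedExt atk, t ∩ f = ∅) := by
  intro f₁ f₂ hf₁ hf₂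
  have o₁ := (groundedExt_postfixed atk hf₁).1
  have o₂ := (groundedExt_postfixed atk hf₂).1
  constructor
  · intro hmem t hto hatk
    obtain ⟨f, hf, haf⟩ := (groundedExt_postfixed atk hmem).2 t hto hatk
    exact ⟨f, hf, (h1 t f hto ((groundedExt_postfixed atk hf).1)).mpr (Or.inl haf)⟩
  · intro h
    apply groundedExt_prefixed atk
    refine ⟨o₁.inter o₂, fun t' ho ha => ?_⟩
    obtain ⟨f, hf, hdisj⟩ := h t' ho ha
    have hfo := (groundedExt_postfixed atk hf).1
    rcases (h1 t' f ho hfo).mp hdisj with hc | hc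
    · exact ⟨f, hf, hc⟩
    · exact (groundedExt_postfixed atk hf).2 t' ho hc
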